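/- One-dimensional Gaussian mechanism: let ε ∈ (0, 1], δ ∈ (0, 1), α > 0, and let μ₁, μ₂ ∈ ℝ with |μ₁ − μ₂| ≤ α. If σ ≥ α · √(2 · log(1.25/δ)) / ε, then for every measurable set S ⊆ ℝ, the Gaussian measures satisfy N(μ₁, σ²)(S) ≤ e^ε · N(μ₂, σ²)(S) + δ and N(μ₂, σ²)(S) ≤ e^ε · N(μ₁, σ²)(S) + δ. -/

import Mathlib

open MeasureTheory ProbabilityTheory Set Real Filter

namespace GaussMech

lemma gauss_Ioi (ν σ a : ℝ) (hσ : 0 < σ) :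
    gaussianReal ν (σ ^ 2).toNNReal (Ioi a)
      = gaussianReal 0 1 (Ioi ((a - ν) / σ)) := by
  have hmap : gaussianReal ν (σ ^ 2).toNNReal
      = Measure.map (· + ν) (Measure.map (σ * ·) (gaussianReal 0 1)) := by
    rw [gaussianReal_map_const_mul, gaussianReal_map_add_const]
    congr 1
    · simp
    · ext
      simp [Real.coe_toNNReal _ (sq_nonneg σ), sq]
      positivity
  rw [hmap, Measure.map_apply (measurable_add_const ν) measurableSet_Ioi,
    preimage_add_const_Ioi,
    Measure.map_apply (measurable_const_mul σ) measurableSet_Ioi,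
    preimage_const_mul_Ioi₀ _ hσ]

lemma neg_std (b : ℝ) : gaussianReal 0 1 (Iio b) = gaussianReal 0 1 (Ioi (-b)) := by
  have hmap : Measure.map ((-1 : ℝ) * ·) (gaussianReal 0 1) = gaussianReal 0 1 := by
    rw [gaussianReal_map_const_mul]
    congr 1
    · simp
    · ext; norm_num
  conv_lhs => rw [← hmap]
  rw [Measure.map_apply (measurable_const_mul _) measurableSet_Iio,
    preimage_const_mul_Iio_of_neg _ (by norm_num : (-1:ℝ) < 0)]
  rw [div_neg, div_one]

lemma sing_null (b : ℝ) : gaussianReal 0 1 {b} = 0 :=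
  gaussianReal_absolutelyContinuous 0 one_ne_zero (volume_singleton)

lemma std_half : gaussianReal 0 1 (Ioi (0:ℝ)) = ENNReal.ofReal (1/2) := by
  set N := gaussianReal 0 1 with hN
  have hIci : N (Ici 0) = N (Ioi 0) := by
    refine le_antisymm ?_ (measure_mono Ioi_subset_Ici_self)
    calc N (Ici 0) = N ({0} ∪ Ioi 0) := by rw [Set.singleton_union, Ioi_insert]
    _ ≤ N {0} + N (Ioi 0) := measure_union_le _ _
    _ = N (Ioi 0) := by rw [sing_null, zero_add]
  have hsum : N (Iio 0) + N (Ici 0) = 1 := by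
    rw [← measure_union (Iio_disjoint_Ici le_rfl) measurableSet_Ici, Iio_union_Ici,
      measure_univ]
  rw [hIci, neg_std 0, neg_zero] at hsum
  have hfin : N (Ioi 0) ≠ ⊤ := (measure_lt_top _ _).ne
  have : (N (Ioi 0)).toReal + (N (Ioi 0)).toReal = 1 := by
    rw [← ENNReal.toReal_add hfin hfin, hsum, ENNReal.toReal_one]
  have h2 : (N (Ioi 0)).toReal = 1/2 := by linarith
  rw [← ENNReal.ofReal_toReal hfin, h2]

lemma gauss_Iio (ν σ a : ℝ) (hσ : 0 < σ) :
    gaussianReal ν (σ ^ 2).toNNReal (Iio a)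
      = gaussianReal 0 1 (Ioi (-((a - ν) / σ))) := by
  have hmap : gaussianReal ν (σ ^ 2).toNNReal
      = Measure.map (· + ν) (Measure.map (σ * ·) (gaussianReal 0 1)) := by
    rw [gaussianReal_map_const_mul, gaussianReal_map_add_const]
    congr 1
    · simp
    · ext
      simp [Real.coe_toNNReal _ (sq_nonneg σ), sq]
      positivity
  rw [hmap, Measure.map_apply (measurable_add_const ν) measurableSet_Iio,
    preimage_add_const_Iio,
    Measure.map_apply (measurable_const_mul σ) measurableSet_Iio,
    preimage_const_mul_Iio₀ _ hσ, neg_std]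

-- improper integral: ∫_{Ioi s} x exp(-x^2/2) = exp(-s^2/2), and integrability for s > 0
lemma xexp_deriv (x : ℝ) : HasDerivAt (fun x : ℝ => -Real.exp (-x^2/2))
    (x * Real.exp (-x^2/2)) x := by
  have h : HasDerivAt (fun x : ℝ => -x^2/2) (-x) x := by
    have := ((hasDerivAt_pow 2 x).neg).div_const 2
    simpa using this.congr_deriv (by ring)
  have := (h.exp).neg
  exact this.congr_deriv (by ring)

lemma xexp_tendsto : Tendsto (fun x : ℝ => -Real.exp (-x^2/2)) atTop (nhds 0) := by
  rw [← neg_zero]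
  refine Tendsto.neg ?_
  refine Real.tendsto_exp_atBot.comp ?_
  have : Tendsto (fun x : ℝ => x^2/2) atTop atTop :=
    (tendsto_pow_atTop (by norm_num)).atTop_div_const (by norm_num)
  simpa [neg_div] using tendsto_neg_atBot_iff.mpr this

lemma integrable_xexp {s : ℝ} (hs : 0 < s) :
    IntegrableOn (fun x => x * Real.exp (-x^2/2)) (Ioi s) :=
  integrableOn_Ioi_deriv_of_nonneg
    (Continuous.continuousWithinAt (by continuity))
    (fun x _ => xexp_deriv x)
    (fun x hx => mul_nonneg (le_of_lt (hs.trans hx)) (Real.exp_nonneg _))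
    xexp_tendsto

lemma integral_xexp {s : ℝ} (hs : 0 < s) :
    ∫ x in Ioi s, x * Real.exp (-x^2/2) = Real.exp (-s^2/2) := by
  have hc : Continuous (fun x : ℝ => -Real.exp (-x^2/2)) := by continuity
  have := integral_Ioi_of_hasDerivAt_of_nonneg hc.continuousWithinAt
    (fun x _ => xexp_deriv x)
    (fun x hx => mul_nonneg (le_of_lt (hs.trans hx)) (Real.exp_nonneg _))
    xexp_tendsto
  rw [this]; ring

lemma tail_pos {s : ℝ} (hs : 0 < s) :
    gaussianReal 0 1 (Ioi s)
      ≤ ENNReal.ofReal (Real.exp (-s ^ 2 / 2) / (s * Real.sqrt (2 * π))) := by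
  rw [gaussianReal_apply_eq_integral _ one_ne_zero]
  refine ENNReal.ofReal_le_ofReal ?_
  have hpdf : ∀ x : ℝ, gaussianPDFReal 0 1 x = (Real.sqrt (2 * π))⁻¹ * Real.exp (-x^2/2) := by
    intro x
    simp [gaussianPDFReal]
  calc ∫ x in Ioi s, gaussianPDFReal 0 1 x
      ≤ ∫ x in Ioi s, ((Real.sqrt (2 * π))⁻¹ * s⁻¹) * (x * Real.exp (-x^2/2)) := by
        refine setIntegral_mono_on
          ((integrable_gaussianPDFReal 0 1).integrableOn)
          (((integrable_xexp hs).const_mul _)) measurableSet_Ioi ?_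
        intro x hx
        rw [hpdf]
        have hx1 : (1:ℝ) ≤ s⁻¹ * x := by
          rw [← div_eq_inv_mul]; exact (one_le_div hs).mpr (le_of_lt hx)
        have h0 : (0:ℝ) ≤ (Real.sqrt (2 * π))⁻¹ * Real.exp (-x^2/2) := by positivity
        calc (Real.sqrt (2 * π))⁻¹ * Real.exp (-x^2/2)
            ≤ (s⁻¹ * x) * ((Real.sqrt (2 * π))⁻¹ * Real.exp (-x^2/2)) := by
              nlinarith
          _ = ((Real.sqrt (2 * π))⁻¹ * s⁻¹) * (x * Real.exp (-x^2/2)) := by ring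
    _ = ((Real.sqrt (2 * π))⁻¹ * s⁻¹) * ∫ x in Ioi s, x * Real.exp (-x^2/2) :=
        integral_const_mul _ _
    _ = Real.exp (-s ^ 2 / 2) / (s * Real.sqrt (2 * π)) := by
        rw [integral_xexp hs]; field_simp

lemma tail_neg {s : ℝ} (hs : s ≤ 0) :
    gaussianReal 0 1 (Ioi s)
      ≤ ENNReal.ofReal (1/2 + (-s) / Real.sqrt (2 * π)) := by
  have hsplit : gaussianReal 0 1 (Ioi s)
      = gaussianReal 0 1 (Ioc s 0) + gaussianReal 0 1 (Ioi 0) := by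
    rw [← measure_union (Ioc_disjoint_Ioi le_rfl) measurableSet_Ioi,
      Ioc_union_Ioi_eq_Ioi hs]
  have hioc : gaussianReal 0 1 (Ioc s 0) ≤ ENNReal.ofReal ((-s) / Real.sqrt (2 * π)) := by
    rw [gaussianReal_apply_eq_integral _ one_ne_zero]
    refine ENNReal.ofReal_le_ofReal ?_
    calc ∫ x in Ioc s 0, gaussianPDFReal 0 1 x
        ≤ ∫ _x in Ioc s 0, (Real.sqrt (2 * π))⁻¹ := by
          refine setIntegral_mono_on ((integrable_gaussianPDFReal 0 1).integrableOn)
            (integrableOn_const measure_Ioc_lt_top.ne) measurableSet_Ioc ?_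
          intro x _
          have : gaussianPDFReal 0 1 x = (Real.sqrt (2 * π))⁻¹ * Real.exp (-x^2/2) := by
            simp [gaussianPDFReal]
          rw [this]
          have h1 : Real.exp (-x^2/2) ≤ 1 := by
            rw [Real.exp_le_one_iff]
            nlinarith [sq_nonneg x]
          exact mul_le_of_le_one_right (inv_nonneg.2 (Real.sqrt_nonneg (2*π))) h1
      _ = (0 - s) * (Real.sqrt (2 * π))⁻¹ := by
          rw [setIntegral_const, Real.volume_real_Ioc, smul_eq_mul,
            max_eq_left (by linarith)]
      _ = (-s) / Real.sqrt (2 * π) := by ring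
  calc gaussianReal 0 1 (Ioi s) = _ := hsplit
    _ ≤ ENNReal.ofReal ((-s) / Real.sqrt (2 * π)) + ENNReal.ofReal (1/2) := by
        rw [std_half]; exact add_le_add hioc le_rfl
    _ = ENNReal.ofReal (1/2 + (-s) / Real.sqrt (2 * π)) := by
        rw [← ENNReal.ofReal_add (div_nonneg (neg_nonneg.2 hs) (Real.sqrt_nonneg _)) (by norm_num)]
        ring_nf

lemma exp_le_aux {x : ℝ} (hx : x < 1) : Real.exp x ≤ 1/(1-x) := by
  have h := Real.add_one_le_exp (-x)
  have h2 : Real.exp x * Real.exp (-x) = 1 := by rw [← Real.exp_add]; simp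
  have h3 : (0:ℝ) < 1 - x := by linarith
  rw [le_div_iff₀ h3]
  nlinarith [Real.exp_pos x]

lemma h605 : Real.exp 0.605 ≤ 25/12 := by
  have h := exp_le_aux (x := 0.3025) (by norm_num)
  have h2 : Real.exp 0.605 = Real.exp 0.3025 * Real.exp 0.3025 := by
    rw [← Real.exp_add]; norm_num
  nlinarith [Real.exp_pos (0.3025:ℝ)]

lemma h021 : Real.exp 0.21 ≤ 5/4 := by
  have h := exp_le_aux (x := 0.07) (by norm_num)
  have h2 : Real.exp 0.21 = Real.exp 0.07 * Real.exp 0.07 * Real.exp 0.07 := by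
    rw [← Real.exp_add, ← Real.exp_add]; norm_num
  nlinarith [Real.exp_pos (0.07:ℝ)]

lemma hhalf : Real.exp (1/2) ≤ 1.6488 := by
  have h : Real.exp (1/2) * Real.exp (1/2) = Real.exp 1 := by
    rw [← Real.exp_add]; norm_num
  nlinarith [Real.exp_pos ((1:ℝ)/2), Real.exp_one_lt_d9]

lemma hsqrt25 : (5/2 : ℝ) ≤ Real.sqrt (2 * π) := by
  have h : ((5:ℝ)/2)^2 ≤ 2*π := by nlinarith [Real.pi_gt_d6]
  nlinarith [Real.sq_sqrt (by positivity : (0:ℝ) ≤ 2*π), Real.sqrt_nonneg (2*π)]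

lemma key1 (δ β L s : ℝ) (hδ0 : 0 < δ) (hβ0 : 0 < β) (hβ : β ^ 2 = 2 * L)
    (hs : s = β - 1/(2*β)) (hβlb : (1.1:ℝ) ≤ β)
    (hexpL : Real.exp (-L) = δ / 1.25) :
    Real.exp (-s^2/2) / (s * Real.sqrt (2*π)) ≤ δ := by
  have hs1 : (0.64:ℝ) ≤ s := by
    have h : 1/(2*β) ≤ 1/(2*1.1) := by
      apply one_div_le_one_div_of_le <;> linarith
    have h' : (1:ℝ)/(2*1.1) ≤ 0.46 := by norm_num
    rw [hs]; linarith
  have hb : β * (1/(2*β)) = 1/2 := by field_simp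
  have hsq2 : s^2 = β^2 - 2*(β*(1/(2*β))) + (1/(2*β))^2 := by rw [hs]; ring
  have hsq : β^2 - 1 ≤ s^2 := by nlinarith [sq_nonneg (1/(2*β))]
  have hexp : Real.exp (-s^2/2) ≤ 1.6488 * (δ / 1.25) := by
    calc Real.exp (-s^2/2) ≤ Real.exp (1/2 - L) := by
          apply Real.exp_le_exp.mpr; linarith
      _ = Real.exp (1/2) * Real.exp (-L) := by rw [← Real.exp_add]; ring_nf
      _ ≤ 1.6488 * (δ/1.25) := by
          rw [hexpL]
          exact mul_le_mul_of_nonneg_right hhalf (by positivity)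
  calc Real.exp (-s^2/2) / (s * Real.sqrt (2*π))
      ≤ (1.6488 * (δ/1.25)) / (0.64 * (5/2)) := by
        apply div_le_div₀ (by positivity) hexp (by norm_num)
        nlinarith [hsqrt25, Real.sqrt_nonneg (2*π)]
    _ ≤ δ := by
        have h2 : 1.6488 * (δ/1.25) / (0.64*(5/2)) = 0.8244 * δ := by ring
        rw [h2]; linarith

lemma key (δ β : ℝ) (hδ0 : 0 < δ) (hδ1 : δ < 1) (hβ : β ^ 2 = 2 * Real.log (1.25 / δ))
    (hβ0 : 0 < β) :
    gaussianReal 0 1 (Ioi (β - 1 / (2 * β))) ≤ ENNReal.ofReal δ := by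
  set L := Real.log (1.25 / δ) with hL
  have hexpL : Real.exp (-L) = δ / 1.25 := by
    rw [Real.exp_neg, Real.exp_log (by positivity)]
    field_simp
  by_cases hcase : δ ≤ 0.6
  · -- main case: positive tail bound
    have hLlb : (0.605 : ℝ) ≤ L := by
      have h1 : (25/12 : ℝ) ≤ 1.25 / δ := by
        rw [le_div_iff₀ hδ0]; nlinarith
      calc (0.605:ℝ) ≤ Real.log (25/12) :=
            (Real.le_log_iff_exp_le (by norm_num)).mpr h605
        _ ≤ L := Real.log_le_log (by norm_num) h1
    have hβlb : (1.1:ℝ) ≤ β := by nlinarith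
    have hspos : (0:ℝ) < β - 1/(2*β) := by
      have h : 1/(2*β) ≤ 1/(2*1.1) := by
        apply one_div_le_one_div_of_le <;> linarith
      have h' : (1:ℝ)/(2*1.1) ≤ 0.46 := by norm_num
      linarith
    refine (tail_pos hspos).trans (ENNReal.ofReal_le_ofReal ?_)
    exact key1 δ β L _ hδ0 hβ0 hβ rfl hβlb hexpL
  · -- large δ case
    push_neg at hcase
    have hLlb : (0.21 : ℝ) ≤ L := by
      have h1 : (5/4 : ℝ) ≤ 1.25 / δ := by
        rw [le_div_iff₀ hδ0]; nlinarith
      calc (0.21:ℝ) ≤ Real.log (5/4) :=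
            (Real.le_log_iff_exp_le (by norm_num)).mpr h021
        _ ≤ L := Real.log_le_log (by norm_num) h1
    have hβlb : (0.648:ℝ) ≤ β := by nlinarith
    have hs1 : (-0.124:ℝ) ≤ β - 1 / (2*β) := by
      have h : 1/(2*β) ≤ 1/(2*0.648) := by
        apply one_div_le_one_div_of_le <;> linarith
      have h' : (1:ℝ)/(2*0.648) ≤ 0.772 := by norm_num
      linarith
    calc gaussianReal 0 1 (Ioi (β - 1/(2*β)))
        ≤ gaussianReal 0 1 (Ioi (-0.124:ℝ)) := measure_mono (Ioi_subset_Ioi hs1)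
      _ ≤ ENNReal.ofReal (1/2 + (-(-0.124:ℝ)) / Real.sqrt (2 * π)) := tail_neg (by norm_num)
      _ ≤ ENNReal.ofReal δ := by
          apply ENNReal.ofReal_le_ofReal
          have h1 : (-(-0.124:ℝ)) / Real.sqrt (2*π) ≤ 0.124/(5/2) := by
            apply div_le_div₀ (by norm_num) (by norm_num) (by norm_num) hsqrt25
          have h2 : (0.124:ℝ)/(5/2) = 0.0496 := by norm_num
          rw [h2] at h1
          linarith

lemma mul_exp_helper {K e1 E e2 : ℝ} (hK : 0 ≤ K) (h : e1 ≤ E * e2) :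
    K * e1 ≤ E * (K * e2) := by nlinarith [mul_le_mul_of_nonneg_left h hK]

set_option maxHeartbeats 1000000 in
lemma one_sided (ε δ α σ : ℝ)
    (hε0 : 0 < ε) (hε1 : ε ≤ 1) (hδ0 : 0 < δ) (hδ1 : δ < 1) (hα : 0 < α)
    (ν₁ ν₂ : ℝ) (hμ : |ν₁ - ν₂| ≤ α)
    (hσ : σ ≥ α * Real.sqrt (2 * Real.log (1.25 / δ)) / ε)
    (S : Set ℝ) (hS : MeasurableSet S) :
    gaussianReal ν₁ (σ ^ 2).toNNReal S
        ≤ ENNReal.ofReal (Real.exp ε) * gaussianReal ν₂ (σ ^ 2).toNNReal S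
          + ENNReal.ofReal δ := by
  have hL : 0 < Real.log (1.25 / δ) := Real.log_pos (by rw [lt_div_iff₀ hδ0]; linarith)
  set β := Real.sqrt (2 * Real.log (1.25 / δ)) with hβdef
  have hβsq : β ^ 2 = 2 * Real.log (1.25 / δ) := Real.sq_sqrt (by linarith)
  have hβ0 : 0 < β := Real.sqrt_pos.mpr (by linarith)
  have hσ0 : 0 < σ := lt_of_lt_of_le (by positivity) hσ
  have hσε : α * β ≤ σ * ε := by
    rw [ge_iff_le, div_le_iff₀ hε0] at hσ
    linarith
  have hv : (σ ^ 2).toNNReal ≠ 0 := by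
    rw [ne_eq, Real.toNNReal_eq_zero, not_le]
    positivity
  have hvcoe : ((σ ^ 2).toNNReal : ℝ) = σ ^ 2 := Real.coe_toNNReal _ (sq_nonneg σ)
  clear_value β
  set c := ν₁ - ν₂ with hc
  clear_value c
  set t := ε * σ ^ 2 - c ^ 2 / 2 with ht
  clear_value t
  set B := {x : ℝ | t < c * (x - ν₁)} with hB
  clear_value B
  have hBm : MeasurableSet B := by
    rw [hB]
    exact measurableSet_lt measurable_const ((measurable_id.sub_const _).const_mul _)
  -- pointwise density inequality off the bad set
  have hpdf : ∀ x, x ∉ B →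
      gaussianPDFReal ν₁ (σ ^ 2).toNNReal x
        ≤ Real.exp ε * gaussianPDFReal ν₂ (σ ^ 2).toNNReal x := by
    intro x hx
    rw [hB, mem_setOf_eq, not_lt] at hx
    simp only [gaussianPDFReal]
    refine mul_exp_helper (inv_nonneg.2 (Real.sqrt_nonneg _)) ?_
    rw [hvcoe, ← Real.exp_add, Real.exp_le_exp]
    have h2σ : (0:ℝ) < 2 * σ ^ 2 := by positivity
    have hε' : ε = (2 * σ ^ 2 * ε) / (2 * σ ^ 2) := by field_simp
    rw [hε', ← add_div, div_le_div_iff_of_pos_right h2σ]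
    have hid : (x - ν₂)^2 - (x - ν₁)^2 = 2*(c*(x-ν₁)) + c^2 := by rw [hc]; ring
    nlinarith [hid, hx]
  -- split the measure
  have hsplit : gaussianReal ν₁ (σ ^ 2).toNNReal S
      ≤ gaussianReal ν₁ (σ ^ 2).toNNReal (S ∩ Bᶜ) + gaussianReal ν₁ (σ ^ 2).toNNReal B := by
    refine le_trans (measure_mono ?_) (measure_union_le _ _)
    intro x hx
    by_cases hxB : x ∈ B
    · exact Or.inr hxB
    · exact Or.inl ⟨hx, hxB⟩
  -- good part
  have hgood : gaussianReal ν₁ (σ ^ 2).toNNReal (S ∩ Bᶜ)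
      ≤ ENNReal.ofReal (Real.exp ε) * gaussianReal ν₂ (σ ^ 2).toNNReal S := by
    rw [gaussianReal_apply _ hv]
    calc ∫⁻ x in S ∩ Bᶜ, gaussianPDF ν₁ (σ ^ 2).toNNReal x
        ≤ ∫⁻ x in S ∩ Bᶜ, ENNReal.ofReal (Real.exp ε) * gaussianPDF ν₂ (σ ^ 2).toNNReal x := by
          refine setLIntegral_mono ((measurable_gaussianPDF _ _).const_mul _) ?_
          intro x hx
          rw [gaussianPDF, gaussianPDF, ← ENNReal.ofReal_mul (Real.exp_nonneg ε)]
          exact ENNReal.ofReal_le_ofReal (hpdf x hx.2)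
      _ = ENNReal.ofReal (Real.exp ε) * ∫⁻ x in S ∩ Bᶜ, gaussianPDF ν₂ (σ ^ 2).toNNReal x :=
          lintegral_const_mul _ (measurable_gaussianPDF _ _)
      _ ≤ ENNReal.ofReal (Real.exp ε) * gaussianReal ν₂ (σ ^ 2).toNNReal S := by
          rw [← gaussianReal_apply _ hv]
          exact mul_le_mul_right (measure_mono inter_subset_left) _
  -- bad part
  have hbadbound : ∀ c' : ℝ, 0 < c' → c' ≤ α →
      β - 1 / (2 * β) ≤ (ε * σ ^ 2 - c' ^ 2 / 2) / (c' * σ) := by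
    intro c' hc'0 hc'α
    have heq : (ε * σ ^ 2 - c' ^ 2 / 2) / (c' * σ) = ε * σ / c' - c' / (2 * σ) := by
      field_simp
    rw [heq]
    have h1 : β ≤ ε * σ / c' := by
      rw [le_div_iff₀ hc'0]
      calc β * c' ≤ β * α := by nlinarith
        _ ≤ ε * σ := by nlinarith
    have h2 : c' / (2 * σ) ≤ 1 / (2 * β) := by
      rw [div_le_div_iff₀ (by positivity) (by positivity)]
      calc c' * (2 * β) ≤ α * (2 * β) := by nlinarith
        _ ≤ 1 * (2 * σ) := by nlinarith
    linarith
  have hbad : gaussianReal ν₁ (σ ^ 2).toNNReal B ≤ ENNReal.ofReal δ := by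
    rcases lt_trichotomy c 0 with hcneg | hczero | hcpos
    · have hBeq : B = Iio (ν₁ + t / c) := by
        ext x
        rw [hB, mem_setOf_eq, mem_Iio]
        have hct : c * (t / c) = t := mul_div_cancel₀ t (ne_of_lt hcneg)
        constructor
        · intro h; nlinarith [hct]
        · intro h; nlinarith [hct]
      rw [hBeq, gauss_Iio _ _ _ hσ0]
      have harg : -((ν₁ + t / c - ν₁) / σ) = (ε * σ ^ 2 - (-c) ^ 2 / 2) / ((-c) * σ) := by
        rw [ht]
        field_simp
        ring
      rw [harg]
      refine le_trans (measure_mono (Ioi_subset_Ioi ?_)) (key δ β hδ0 hδ1 hβsq hβ0)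
      refine hbadbound (-c) (by linarith) ?_
      rw [hc]
      have := abs_le.mp hμ
      linarith [this.1]
    · have hBempty : B = ∅ := by
        rw [hB]
        ext x
        simp only [mem_setOf_eq, mem_empty_iff_false, iff_false, not_lt, hczero, zero_mul]
        rw [ht, hczero]
        norm_num
        positivity
      rw [hBempty]
      simp
    · have hBeq : B = Ioi (ν₁ + t / c) := by
        ext x
        rw [hB, mem_setOf_eq, mem_Ioi]
        have hct : c * (t / c) = t := mul_div_cancel₀ t (ne_of_gt hcpos)
        constructor
        · intro h; nlinarith [hct]
        · intro h; nlinarith [hct]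
      rw [hBeq, gauss_Ioi _ _ _ hσ0]
      have harg : (ν₁ + t / c - ν₁) / σ = (ε * σ ^ 2 - c ^ 2 / 2) / (c * σ) := by
        rw [ht]
        field_simp
        ring
      rw [harg]
      refine le_trans (measure_mono (Ioi_subset_Ioi ?_)) (key δ β hδ0 hδ1 hβsq hβ0)
      refine hbadbound c hcpos ?_
      rw [hc]
      have := abs_le.mp hμ
      linarith [this.2]
  calc gaussianReal ν₁ (σ ^ 2).toNNReal S
      ≤ gaussianReal ν₁ (σ ^ 2).toNNReal (S ∩ Bᶜ) + gaussianReal ν₁ (σ ^ 2).toNNReal B :=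
        hsplit
    _ ≤ ENNReal.ofReal (Real.exp ε) * gaussianReal ν₂ (σ ^ 2).toNNReal S
          + ENNReal.ofReal δ := add_le_add hgood hbad

end GaussMech

/-- **One-dimensional Gaussian mechanism.**
If `|μ₁ - μ₂| ≤ α` and `σ ≥ α * √(2 log(1.25/δ)) / ε` with `ε ∈ (0,1]`, `δ ∈ (0,1)`,
`α > 0`, then the Gaussian measures `N(μ₁, σ²)` and `N(μ₂, σ²)` are
`(ε, δ)`-indistinguishable: for every measurable `S ⊆ ℝ`,
`N(μ₁,σ²)(S) ≤ e^ε N(μ₂,σ²)(S) + δ` and `N(μ₂,σ²)(S) ≤ e^ε N(μ₁,σ²)(S) + δ`. -/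
theorem gaussian_mechanism_one_dim (ε δ α σ : ℝ)
    (hε0 : 0 < ε) (hε1 : ε ≤ 1) (hδ0 : 0 < δ) (hδ1 : δ < 1) (hα : 0 < α)
    (μ₁ μ₂ : ℝ) (hμ : |μ₁ - μ₂| ≤ α)
    (hσ : σ ≥ α * Real.sqrt (2 * Real.log (1.25 / δ)) / ε) :
    ∀ S : Set ℝ, MeasurableSet S →
      gaussianReal μ₁ (σ ^ 2).toNNReal S
          ≤ ENNReal.ofReal (Real.exp ε) * gaussianReal μ₂ (σ ^ 2).toNNReal S
            + ENNReal.ofReal δ ∧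
      gaussianReal μ₂ (σ ^ 2).toNNReal S
          ≤ ENNReal.ofReal (Real.exp ε) * gaussianReal μ₁ (σ ^ 2).toNNReal S
            + ENNReal.ofReal δ := by
  intro S hS
  refine ⟨GaussMech.one_sided ε δ α σ hε0 hε1 hδ0 hδ1 hα μ₁ μ₂ hμ hσ S hS,
    GaussMech.one_sided ε δ α σ hε0 hε1 hδ0 hδ1 hα μ₂ μ₁ ?_ hσ S hS⟩
  rwa [abs_sub_comm]
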